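/- With f_n, g_n defined by (f_1,g_1) = (5,0) and (f_{n+1},g_{n+1}) = (2f_n+g_n, f_n+g_n), set N_bulk(n) = 1 + Σ_{k=1}^n (f_k + g_k) and N_boundary(n) = 4f_n + 3g_n. Then the ratio N_bulk(n)/N_boundary(n) converges to 1/√5 as n → ∞. -/

import Mathlib

open Filter
set_option maxHeartbeats 800000

/-- For the pentagon holographic code with layer counts
`(f₁,g₁) = (5,0)`, `(f_{n+1}, g_{n+1}) = (2f_n + g_n, f_n + g_n)`,
`N_bulk(n) = 1 + Σ_{k=1}^n (f_k + g_k)` and `N_boundary(n) = 4f_n + 3g_n`,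
the rate `N_bulk(n)/N_boundary(n)` converges to `1/√5`. -/
theorem pentagon_code_rate (f g : ℕ → ℝ)
    (hf1 : f 1 = 5) (hg1 : g 1 = 0)
    (hrec : ∀ n, 1 ≤ n → f (n + 1) = 2 * f n + g n ∧ g (n + 1) = f n + g n) :
    Tendsto (fun n : ℕ =>
        (1 + ∑ k ∈ Finset.Icc 1 n, (f k + g k)) / (4 * f n + 3 * g n))
      atTop (nhds (1 / Real.sqrt 5)) := by
  have hs2 : Real.sqrt 5 ^ 2 = 5 := Real.sq_sqrt (by norm_num)
  set s := Real.sqrt 5 with hs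
  have hs_pos : (0:ℝ) < s := Real.sqrt_pos.mpr (by norm_num)
  have hs_lt : s < 3 := by nlinarith
  have hs_gt : 2 < s := by nlinarith
  set L : ℝ := (3 + s) / 2 with hLdef
  set M : ℝ := (3 - s) / 2 with hMdef
  have hL1 : 1 < L := by rw [hLdef]; linarith
  have hL0 : 0 < L := by linarith
  have hM0 : 0 < M := by rw [hMdef]; linarith
  have hML : M < L := by rw [hLdef, hMdef]; linarith
  set a : ℝ := (5 - s) / 2 with hadef
  set b : ℝ := (5 + s) / 2 with hbdef
  set c : ℝ := (3 * s - 5) / 2 with hcdef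
  set d : ℝ := (3 * s + 5) / 2 with hddef
  -- closed forms
  have closed : ∀ n, 1 ≤ n → f n = a * L ^ n + b * M ^ n ∧ g n = c * L ^ n - d * M ^ n := by
    intro n hn
    induction n with
    | zero => omega
    | succ m ih =>
      rcases Nat.lt_or_ge m 1 with hm | hm
      · interval_cases m
        constructor
        · rw [hf1, pow_one, pow_one, hadef, hbdef, hLdef, hMdef]
          nlinarith
        · rw [hg1, pow_one, pow_one, hcdef, hddef, hLdef, hMdef]
          nlinarith
      · obtain ⟨hfm, hgm⟩ := ih hm
        obtain ⟨hf', hg'⟩ := hrec m hm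
        constructor
        · rw [hf', hfm, hgm, pow_succ, pow_succ, hadef, hbdef, hcdef, hddef,
            hLdef, hMdef]
          linear_combination (((3+s)/2)^m / 4 + ((3-s)/2)^m / 4) * hs2
        · rw [hg', hfm, hgm, pow_succ, pow_succ, hadef, hbdef, hcdef, hddef,
            hLdef, hMdef]
          linear_combination (-3 * ((3+s)/2)^m / 4 - 3 * ((3-s)/2)^m / 4) * hs2
  -- telescoping sum
  have hsum : ∀ n : ℕ, (∑ k ∈ Finset.Icc 1 n, (f k + g k)) = f (n + 1) - 5 := by
    intro n
    induction n with
    | zero => simp [hf1]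
    | succ m ih =>
      rw [Finset.sum_Icc_succ_top (by omega : 1 ≤ m + 1), ih,
        (hrec (m + 1) (by omega)).1]
      ring
  -- limits of geometric terms
  have hr0 : Tendsto (fun n : ℕ => (M / L) ^ n) atTop (nhds 0) := by
    apply tendsto_pow_atTop_nhds_zero_of_lt_one
    · positivity
    · rw [div_lt_one hL0]; exact hML
  have ht0 : Tendsto (fun n : ℕ => (L⁻¹) ^ n) atTop (nhds 0) := by
    apply tendsto_pow_atTop_nhds_zero_of_lt_one
    · positivity
    · rw [inv_lt_one_iff₀]; right; exact hL1
  have hden_ne : (4 * a + 3 * c) + (4 * b - 3 * d) * 0 ≠ 0 := by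
    rw [hadef, hcdef]; intro h; nlinarith
  have hlim : Tendsto (fun n : ℕ =>
      (a * L + b * M * (M / L) ^ n - 4 * (L⁻¹) ^ n) /
        ((4 * a + 3 * c) + (4 * b - 3 * d) * (M / L) ^ n))
      atTop (nhds ((a * L + b * M * 0 - 4 * 0) / ((4 * a + 3 * c) + (4 * b - 3 * d) * 0))) := by
    exact Tendsto.div (((tendsto_const_nhds.add ((tendsto_const_nhds).mul hr0)).sub
      ((tendsto_const_nhds).mul ht0))) (tendsto_const_nhds.add ((tendsto_const_nhds).mul hr0))
      hden_ne
  have hval : (a * L + b * M * 0 - 4 * 0) / ((4 * a + 3 * c) + (4 * b - 3 * d) * 0) = 1 / s := by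
    rw [hadef, hbdef, hcdef, hddef, hLdef, hMdef]
    rw [div_eq_div_iff (by nlinarith) (by positivity)]
    nlinarith
  rw [← hval]
  apply hlim.congr'
  filter_upwards [eventually_ge_atTop 1] with n hn
  obtain ⟨hfn, hgn⟩ := closed n hn
  obtain ⟨hfn1, hgn1⟩ := closed (n + 1) (by omega)
  have hLn : (L ^ n)⁻¹ ≠ 0 := by positivity
  rw [hsum n]
  have key : (1 + (f (n + 1) - 5)) / (4 * f n + 3 * g n)
      = ((f (n + 1) - 4) * (L ^ n)⁻¹) / ((4 * f n + 3 * g n) * (L ^ n)⁻¹) := by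
    rw [mul_div_mul_right _ _ hLn]
    ring_nf
  rw [key, hfn, hgn, hfn1]
  have hLne : L ≠ 0 := ne_of_gt hL0
  rw [div_pow, inv_pow]
  congr 1 <;> field_simp <;> ring
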